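/- Let n ≥ 1 and let x_k, m_k : ℝ → ℝ (k = 1, …, n) be differentiable functions satisfying ẋ_k(t) = Σ_{i=1}^n m_i(t) |x_k(t) − x_i(t)| and ṁ_k(t) = 2 Σ_{i=1}^n m_k(t) m_i(t) sgn(x_i(t) − x_k(t)) for all t (with sgn 0 = 0), and suppose x_1(t) < x_2(t) < ⋯ < x_n(t) for all t. Then for each k with 1 ≤ k ≤ n, the function M_k(t) = Σ_{I} (∏_{i ∈ I} m_i(t)) (∏_{j=1}^{k−1} (x_{i_j}(t) − x_{i_{j+1}}(t))²) is constant in t, where the sum runs over all k-element subsets I = {i_1 < ⋯ < i_k} of {1, …, n}, and the inner product over j is interpreted as 1 when k = 1. -/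

import Mathlib

open Finset

variable {n : ℕ}

/-- telescoping over `Fin` -/
lemma pk_tele : ∀ (K : ℕ) (f : Fin (K + 1) → ℝ),
    ∑ j : Fin K, (f j.castSucc - f j.succ) = f 0 - f (Fin.last K) := by
  intro K
  induction K with
  | zero => intro f; simp [Fin.last]
  | succ K ih =>
    intro f
    rw [Fin.sum_univ_castSucc]
    have h2 := ih (fun q => f q.castSucc)
    have e : ∀ j : Fin K, f (j.castSucc).castSucc - f (j.castSucc).succ
        = f (j.castSucc).castSucc - f (j.succ).castSucc := by
      intro j; rw [Fin.succ_castSucc]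
    calc ∑ j : Fin K, (f (j.castSucc).castSucc - f (j.castSucc).succ)
          + (f (Fin.last K).castSucc - f (Fin.last K).succ)
        = ∑ j : Fin K, (f (j.castSucc).castSucc - f (j.succ).castSucc)
          + (f (Fin.last K).castSucc - f (Fin.last K).succ) := by
          rw [Finset.sum_congr rfl (fun j _ => e j)]
      _ = (f (0 : Fin (K+1)).castSucc - f (Fin.last K).castSucc)
          + (f (Fin.last K).castSucc - f (Fin.last K).succ) := by rw [h2]
      _ = f 0 - f (Fin.last (K+1)) := by
          rw [Fin.succ_last]
          simp [Fin.castSucc_zero]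

noncomputable def pkSgt (M : Fin n → ℝ) (a : Fin n) : ℝ :=
  ∑ i ∈ Finset.univ.filter (fun i => a < i), M i

noncomputable def pkSlt (M : Fin n → ℝ) (a : Fin n) : ℝ :=
  ∑ i ∈ Finset.univ.filter (fun i => i < a), M i

lemma pk_le_split (M : Fin n → ℝ) (a : Fin n) :
    ∑ i ∈ Finset.univ.filter (fun i => i ≤ a), M i = M a + pkSlt M a := by
  classical
  have h : Finset.univ.filter (fun i : Fin n => i ≤ a)
      = insert a (Finset.univ.filter (fun i => i < a)) := by
    ext i
    simp only [mem_filter, mem_univ, true_and, mem_insert]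
    constructor
    · intro h; rcases lt_or_eq_of_le h with h | h
      · exact Or.inr h
      · exact Or.inl h
    · rintro (rfl | h); · exact le_refl _
      · exact le_of_lt h
  rw [h, Finset.sum_insert (by simp)]
  rfl

lemma pk_ge_split (M : Fin n → ℝ) (a : Fin n) :
    ∑ i ∈ Finset.univ.filter (fun i => a ≤ i), M i = M a + pkSgt M a := by
  classical
  have h : Finset.univ.filter (fun i : Fin n => a ≤ i)
      = insert a (Finset.univ.filter (fun i => a < i)) := by
    ext i
    simp only [mem_filter, mem_univ, true_and, mem_insert]
    constructor
    · intro h; rcases lt_or_eq_of_le h with h | h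
      · exact Or.inr h
      · exact Or.inl h.symm
    · rintro (rfl | h); · exact le_refl _
      · exact le_of_lt h
  rw [h, Finset.sum_insert (by simp)]
  rfl

lemma pk_total (M : Fin n → ℝ) (a : Fin n) :
    ∑ i, M i = pkSlt M a + M a + pkSgt M a := by
  classical
  have h : ∀ i : Fin n, M i = (if i < a then M i else 0) + (if i = a then M i else 0)
      + (if a < i then M i else 0) := by
    intro i
    rcases lt_trichotomy i a with h | h | h
    · rw [if_pos h, if_neg (by rintro rfl; exact lt_irrefl _ h), if_neg (by
        intro h'; exact absurd (lt_trans h h') (lt_irrefl _)), add_zero, add_zero]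
    · subst h; simp
    · rw [if_neg (by intro h'; exact absurd (lt_trans h h') (lt_irrefl _)),
        if_neg (by rintro rfl; exact lt_irrefl _ h), if_pos h, zero_add, zero_add]
  rw [Finset.sum_congr rfl (fun i _ => h i)]
  rw [Finset.sum_add_distrib, Finset.sum_add_distrib, Finset.sum_ite_eq' Finset.univ a M]
  rw [← Finset.sum_filter, ← Finset.sum_filter]
  simp [pkSlt, pkSgt]

lemma pk_sign_sum (X M : Fin n → ℝ) (hX : StrictMono X) (a : Fin n) :
    ∑ i, M a * M i * Real.sign (X i - X a) = M a * (pkSgt M a - pkSlt M a) := by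
  classical
  have h : ∀ i : Fin n, M a * M i * Real.sign (X i - X a)
      = (if a < i then M a * M i else 0) - (if i < a then M a * M i else 0) := by
    intro i
    rcases lt_trichotomy a i with h | h | h
    · rw [Real.sign_of_pos (by have := hX h; linarith), if_pos h,
        if_neg (by intro h'; exact absurd (lt_trans h h') (lt_irrefl _))]
      ring
    · subst h; simp
    · rw [Real.sign_of_neg (by have := hX h; linarith),
        if_neg (by intro h'; exact absurd (lt_trans h h') (lt_irrefl _)), if_pos h]
      ring
  rw [Finset.sum_congr rfl (fun i _ => h i), Finset.sum_sub_distrib,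
    ← Finset.sum_filter, ← Finset.sum_filter, pkSgt, pkSlt, ← Finset.mul_sum, ← Finset.mul_sum]
  ring

lemma pk_absdiff (X M : Fin n → ℝ) (hX : StrictMono X) (a b : Fin n) (hab : a < b) :
    2 * (X a - X b) * ((∑ i, M i * |X a - X i|) - ∑ i, M i * |X b - X i|)
    = 2 * (X a - X b) ^ 2 * ((M a + pkSlt M a) - (M b + pkSgt M b))
      + ∑ i ∈ Finset.univ.filter (fun i => a < i ∧ i < b),
          M i * (2 * ((X i - X b) ^ 2 - (X i - X a) ^ 2)) := by
  classical
  have key : ∀ i : Fin n, 2 * (X a - X b) * (M i * |X a - X i| - M i * |X b - X i|)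
      = (if i ≤ a then M i * (2 * (X a - X b) ^ 2) else 0)
        + (if b ≤ i then -(M i * (2 * (X a - X b) ^ 2)) else 0)
        + (if a < i ∧ i < b then M i * (2 * ((X i - X b) ^ 2 - (X i - X a) ^ 2)) else 0) := by
    intro i
    have hXab : X a < X b := hX hab
    rcases le_or_gt i a with h1 | h1
    · have hia : X i ≤ X a := (hX.monotone h1)
      have hib : X i < X b := lt_of_le_of_lt hia hXab
      rw [if_pos h1, if_neg (by intro h'; exact absurd (lt_of_lt_of_le hab h') (not_lt.mpr h1)),
        if_neg (by rintro ⟨h', _⟩; exact absurd h1 (not_le.mpr h')),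
        abs_of_nonneg (by linarith), abs_of_nonneg (by linarith)]
      ring
    · rcases le_or_gt b i with h2 | h2
      · have hbi : X b ≤ X i := hX.monotone h2
        rw [if_neg (not_le.mpr h1), if_pos h2,
          if_neg (by rintro ⟨_, h'⟩; exact absurd h2 (not_le.mpr h')),
          abs_of_nonpos (by linarith), abs_of_nonpos (by linarith)]
        ring
      · have hai : X a < X i := hX h1
        have hib : X i < X b := hX h2
        rw [if_neg (not_le.mpr h1), if_neg (not_le.mpr h2), if_pos ⟨h1, h2⟩,
          abs_of_nonpos (by linarith), abs_of_nonneg (by linarith)]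
        ring
  have expand : 2 * (X a - X b) * ((∑ i, M i * |X a - X i|) - ∑ i, M i * |X b - X i|)
      = ∑ i : Fin n, 2 * (X a - X b) * (M i * |X a - X i| - M i * |X b - X i|) := by
    rw [← Finset.sum_sub_distrib, Finset.mul_sum]
  rw [expand, Finset.sum_congr rfl (fun i _ => key i), Finset.sum_add_distrib,
    Finset.sum_add_distrib, ← Finset.sum_filter, ← Finset.sum_filter, ← Finset.sum_filter]
  have e1 : ∑ i ∈ Finset.univ.filter (fun i => i ≤ a), M i * (2 * (X a - X b) ^ 2)
      = (M a + pkSlt M a) * (2 * (X a - X b) ^ 2) := by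
    rw [← Finset.sum_mul, pk_le_split]
  have e2 : ∑ i ∈ Finset.univ.filter (fun i => b ≤ i), -(M i * (2 * (X a - X b) ^ 2))
      = -((M b + pkSgt M b) * (2 * (X a - X b) ^ 2)) := by
    rw [Finset.sum_neg_distrib, ← Finset.sum_mul, pk_ge_split]
  rw [e1, e2]
  ring

variable {k' : ℕ}

noncomputable def pkP (M : Fin n → ℝ) (σ : Fin (k' + 1) → Fin n) : ℝ := ∏ j, M (σ j)

noncomputable def pkgap (X : Fin n → ℝ) (σ : Fin (k' + 1) → Fin n) (j : Fin k') : ℝ :=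
  X (σ j.castSucc) - X (σ j.succ)

noncomputable def pkQ (X : Fin n → ℝ) (σ : Fin (k' + 1) → Fin n) : ℝ :=
  ∏ j, pkgap X σ j ^ 2

noncomputable def pkQe (X : Fin n → ℝ) (σ : Fin (k' + 1) → Fin n) (j : Fin k') : ℝ :=
  ∏ l ∈ Finset.univ.erase j, pkgap X σ l ^ 2

lemma pk_L3a (M : Fin n → ℝ) (σ : Fin (k' + 1) → Fin n) :
    ∑ j : Fin (k' + 1), (pkSgt M (σ j) - pkSlt M (σ j))
      + ∑ j : Fin k', ((M (σ j.castSucc) + pkSlt M (σ j.castSucc))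
          - (M (σ j.succ) + pkSgt M (σ j.succ)))
    = pkSgt M (σ (Fin.last k')) - pkSlt M (σ 0) := by
  classical
  have T := pk_tele k' (fun q => pkSgt M (σ q) + M (σ q))
  have E : ∑ j : Fin k', ((M (σ j.castSucc) + pkSlt M (σ j.castSucc))
        - (M (σ j.succ) + pkSgt M (σ j.succ)))
      = ∑ j : Fin k', (((pkSgt M (σ j.castSucc) + M (σ j.castSucc))
          - (pkSgt M (σ j.succ) + M (σ j.succ)))
        + (pkSlt M (σ j.castSucc) - pkSgt M (σ j.castSucc))) := by
    apply Finset.sum_congr rfl; intro j _; ring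
  rw [E, Finset.sum_add_distrib, T,
    Fin.sum_univ_castSucc (f := fun q => pkSgt M (σ q) - pkSlt M (σ q))]
  have hz : ∑ j : Fin k', (pkSgt M (σ j.castSucc) - pkSlt M (σ j.castSucc))
      + ∑ j : Fin k', (pkSlt M (σ j.castSucc) - pkSgt M (σ j.castSucc)) = 0 := by
    rw [← Finset.sum_add_distrib]
    apply Finset.sum_eq_zero; intro j _; ring
  have G0 := pk_total M (σ 0)
  have GL := pk_total M (σ (Fin.last k'))
  linarith

lemma pk_per_sigma (X M : Fin n → ℝ) (hX : StrictMono X)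
    (σ : Fin (k' + 1) → Fin n) (hσ : StrictMono σ) :
    (∑ j, (∏ l ∈ Finset.univ.erase j, M (σ l))
        * (2 * ∑ i, M (σ j) * M i * Real.sign (X i - X (σ j)))) * pkQ X σ
    + pkP M σ * (∑ j : Fin k', pkQe X σ j
        * (2 * (X (σ j.castSucc) - X (σ j.succ))
          * ((∑ i, M i * |X (σ j.castSucc) - X i|) - ∑ i, M i * |X (σ j.succ) - X i|)))
    = 2 * (pkP M σ * pkQ X σ * (pkSgt M (σ (Fin.last k')) - pkSlt M (σ 0)))
      + ∑ j : Fin k', ∑ i ∈ Finset.univ.filter (fun i => σ j.castSucc < i ∧ i < σ j.succ),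
          pkP M σ * pkQe X σ j
            * (M i * (2 * ((X i - X (σ j.succ)) ^ 2 - (X i - X (σ j.castSucc)) ^ 2))) := by
  classical
  have e1 : ∀ j : Fin (k' + 1), (∏ l ∈ Finset.univ.erase j, M (σ l))
      * (2 * ∑ i, M (σ j) * M i * Real.sign (X i - X (σ j)))
      = 2 * pkP M σ * (pkSgt M (σ j) - pkSlt M (σ j)) := by
    intro j
    rw [pk_sign_sum X M hX (σ j)]
    have h := Finset.mul_prod_erase Finset.univ (fun l => M (σ l)) (Finset.mem_univ j)
    rw [pkP, ← h]
    ring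
  have e2 : ∀ j : Fin k', pkQe X σ j
      * (2 * (X (σ j.castSucc) - X (σ j.succ))
        * ((∑ i, M i * |X (σ j.castSucc) - X i|) - ∑ i, M i * |X (σ j.succ) - X i|))
      = 2 * pkQ X σ * ((M (σ j.castSucc) + pkSlt M (σ j.castSucc))
          - (M (σ j.succ) + pkSgt M (σ j.succ)))
        + pkQe X σ j * ∑ i ∈ Finset.univ.filter (fun i => σ j.castSucc < i ∧ i < σ j.succ),
            M i * (2 * ((X i - X (σ j.succ)) ^ 2 - (X i - X (σ j.castSucc)) ^ 2)) := by
    intro j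
    have hab : σ j.castSucc < σ j.succ := hσ (Fin.castSucc_lt_succ : j.castSucc < j.succ)
    have habs := pk_absdiff X M hX _ _ hab
    rw [habs]
    have hQ := Finset.mul_prod_erase Finset.univ (fun l => pkgap X σ l ^ 2) (Finset.mem_univ j)
    rw [pkQ, ← hQ]
    simp only [pkgap, pkQe]
    ring
  rw [Finset.sum_congr rfl (fun j _ => e1 j), ← Finset.mul_sum]
  rw [Finset.sum_congr rfl (fun j _ => e2 j), Finset.sum_add_distrib, ← Finset.mul_sum]
  have E3 : ∀ j : Fin k',
      ∑ i ∈ Finset.univ.filter (fun i => σ j.castSucc < i ∧ i < σ j.succ),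
          pkP M σ * pkQe X σ j
            * (M i * (2 * ((X i - X (σ j.succ)) ^ 2 - (X i - X (σ j.castSucc)) ^ 2)))
      = pkP M σ * (pkQe X σ j
          * ∑ i ∈ Finset.univ.filter (fun i => σ j.castSucc < i ∧ i < σ j.succ),
              M i * (2 * ((X i - X (σ j.succ)) ^ 2 - (X i - X (σ j.castSucc)) ^ 2))) := by
    intro j
    simp only [Finset.mul_sum]
    exact Finset.sum_congr rfl (fun i _ => by ring)
  rw [Finset.sum_congr rfl (fun j _ => E3 j), ← Finset.mul_sum]
  rw [← pk_L3a M σ]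
  ring

/-! ### Combinatorial helpers -/

def pkS (n r : ℕ) : Finset (Fin r → Fin n) :=
  Finset.univ.filter fun σ => ∀ a b : Fin r, a < b → σ a < σ b

lemma pk_mem_S {r : ℕ} {σ : Fin r → Fin n} : σ ∈ pkS n r ↔ StrictMono σ := by
  constructor
  · intro h a b hab
    exact (Finset.mem_filter.mp h).2 a b hab
  · intro h
    exact Finset.mem_filter.mpr ⟨Finset.mem_univ _, fun a b hab => h hab⟩

lemma pk_succAbove_coe {K : ℕ} (p : Fin (K + 1)) (l : Fin K) :
    ((p.succAbove l : Fin (K + 1)) : ℕ) = if (l : ℕ) < (p : ℕ) then (l : ℕ) else (l : ℕ) + 1 := by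
  simp only [Fin.succAbove]
  split_ifs with h1 h2 <;> simp_all [Fin.lt_def]

lemma pk_prod_erase_eq {K : ℕ} (g : Fin K → ℝ) (q : Fin K) :
    ∏ l ∈ Finset.univ.erase q, g l = ∏ l, (if l = q then 1 else g l) := by
  have h1 : ∏ l ∈ Finset.univ.erase q, (if l = q then 1 else g l)
      = ∏ l, (if l = q then 1 else g l) :=
    Finset.prod_erase _ (by simp)
  rw [← h1]
  exact Finset.prod_congr rfl (fun l hl => (if_neg (Finset.ne_of_mem_erase hl)).symm)

section evalLemmas

variable {σ : Fin (k' + 1) → Fin n} {i : Fin n}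

lemma pk_snoc_lt (l : Fin (k' + 2)) (h : (l : ℕ) < k' + 1) :
    (Fin.snoc σ i : Fin (k' + 2) → Fin n) l = σ ⟨l, h⟩ := by
  have e : Fin.castSucc ⟨(l : ℕ), h⟩ = l := by apply Fin.ext; simp
  conv_lhs => rw [← e]
  rw [Fin.snoc_castSucc]

lemma pk_snoc_eq (l : Fin (k' + 2)) (h : (l : ℕ) = k' + 1) :
    (Fin.snoc σ i : Fin (k' + 2) → Fin n) l = i := by
  have e : Fin.last (k' + 1) = l := by apply Fin.ext; simp [h]
  conv_lhs => rw [← e]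
  rw [Fin.snoc_last]

lemma pk_cons_zero (l : Fin (k' + 2)) (h : (l : ℕ) = 0) :
    (Fin.cons i σ : Fin (k' + 2) → Fin n) l = i := by
  have e : (0 : Fin (k' + 2)) = l := by apply Fin.ext; simp [h]
  conv_lhs => rw [← e]
  rw [Fin.cons_zero]

lemma pk_cons_pos (l : Fin (k' + 2)) (h : 0 < (l : ℕ)) :
    (Fin.cons i σ : Fin (k' + 2) → Fin n) l
      = σ ⟨(l : ℕ) - 1, by have := l.isLt; omega⟩ := by
  have e : Fin.succ ⟨(l : ℕ) - 1, by have := l.isLt; omega⟩ = l := by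
    apply Fin.ext; simp [Fin.val_succ]; omega
  conv_lhs => rw [← e]
  rw [Fin.cons_succ]

/-- insertion of a new value at position `j+1` -/
def pkIns (j : Fin k') (i : Fin n) (σ : Fin (k' + 1) → Fin n) : Fin (k' + 2) → Fin n :=
  Fin.insertNth (Fin.castSucc j.succ) i σ

lemma pk_ins_lt (j : Fin k') (l : Fin (k' + 2)) (h : (l : ℕ) < (j : ℕ) + 1) :
    pkIns j i σ l = σ ⟨(l : ℕ), by have := j.isLt; omega⟩ := by
  have hp : (Fin.castSucc j.succ).succAbove ⟨(l : ℕ), by have := j.isLt; omega⟩ = l := by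
    apply Fin.ext; rw [pk_succAbove_coe]
    simp only [Fin.val_mk, Fin.coe_castSucc, Fin.val_succ]
    split_ifs <;> omega
  simp only [pkIns]
  conv_lhs => rw [← hp]
  rw [Fin.insertNth_apply_succAbove]

lemma pk_ins_eq (j : Fin k') (l : Fin (k' + 2)) (h : (l : ℕ) = (j : ℕ) + 1) :
    pkIns j i σ l = i := by
  have e : Fin.castSucc j.succ = l := by apply Fin.ext; simp [h]
  simp only [pkIns]
  conv_lhs => rw [← e]
  rw [Fin.insertNth_apply_same]

lemma pk_ins_gt (j : Fin k') (l : Fin (k' + 2)) (h : (j : ℕ) + 1 < (l : ℕ)) :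
    pkIns j i σ l = σ ⟨(l : ℕ) - 1, by have := l.isLt; omega⟩ := by
  have hp : (Fin.castSucc j.succ).succAbove ⟨(l : ℕ) - 1, by have := l.isLt; omega⟩ = l := by
    apply Fin.ext; rw [pk_succAbove_coe]
    simp only [Fin.val_mk, Fin.coe_castSucc, Fin.val_succ]
    split_ifs <;> omega
  simp only [pkIns]
  conv_lhs => rw [← hp]
  rw [Fin.insertNth_apply_succAbove]

lemma pk_good_snoc (hσ : StrictMono σ) (hi : σ (Fin.last k') < i) :
    StrictMono (Fin.snoc σ i : Fin (k' + 2) → Fin n) := by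
  rw [Fin.strictMono_iff_lt_succ]
  intro q
  have hq1 : ((q.castSucc : Fin (k' + 2)) : ℕ) = (q : ℕ) := by simp
  have hq2 : ((q.succ : Fin (k' + 2)) : ℕ) = (q : ℕ) + 1 := by simp
  have hqk := q.isLt
  by_cases h : (q : ℕ) < k'
  · rw [pk_snoc_lt q.castSucc (by omega), pk_snoc_lt q.succ (by omega)]
    apply hσ
    rw [Fin.mk_lt_mk]; omega
  · have hq : (q : ℕ) = k' := by omega
    rw [pk_snoc_lt q.castSucc (by omega), pk_snoc_eq q.succ (by omega)]
    have e : (⟨((q.castSucc : Fin (k' + 2)) : ℕ), by omega⟩ : Fin (k' + 1))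
        = Fin.last k' := by
      apply Fin.ext; simp [hq]
    rw [e]; exact hi

lemma pk_good_cons (hσ : StrictMono σ) (hi : i < σ 0) :
    StrictMono (Fin.cons i σ : Fin (k' + 2) → Fin n) := by
  rw [Fin.strictMono_iff_lt_succ]
  intro q
  have hq1 : ((q.castSucc : Fin (k' + 2)) : ℕ) = (q : ℕ) := by simp
  have hq2 : ((q.succ : Fin (k' + 2)) : ℕ) = (q : ℕ) + 1 := by simp
  have hqk := q.isLt
  by_cases h : (q : ℕ) = 0
  · rw [pk_cons_zero q.castSucc (by omega), pk_cons_pos q.succ (by omega)]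
    have e : (⟨((q.succ : Fin (k' + 2)) : ℕ) - 1, by omega⟩ : Fin (k' + 1)) = 0 := by
      apply Fin.ext; simp [hq2, h]
    rw [e]; exact hi
  · rw [pk_cons_pos q.castSucc (by omega), pk_cons_pos q.succ (by omega)]
    apply hσ
    rw [Fin.mk_lt_mk]; omega

lemma pk_good_ins (hσ : StrictMono σ) (j : Fin k')
    (h1 : σ j.castSucc < i) (h2 : i < σ j.succ) :
    StrictMono (pkIns j i σ) := by
  rw [Fin.strictMono_iff_lt_succ]
  intro q
  have hq1 : ((q.castSucc : Fin (k' + 2)) : ℕ) = (q : ℕ) := by simp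
  have hq2 : ((q.succ : Fin (k' + 2)) : ℕ) = (q : ℕ) + 1 := by simp
  have hqk := q.isLt
  have hjk := j.isLt
  rcases lt_trichotomy ((q : ℕ) + 1) ((j : ℕ) + 1) with h | h | h
  · rw [pk_ins_lt j q.castSucc (by omega), pk_ins_lt j q.succ (by omega)]
    apply hσ
    rw [Fin.mk_lt_mk]; omega
  · rw [pk_ins_lt j q.castSucc (by omega), pk_ins_eq j q.succ (by omega)]
    have e : (⟨((q.castSucc : Fin (k' + 2)) : ℕ), by omega⟩ : Fin (k' + 1))
        = j.castSucc := by
      apply Fin.ext; simp [hq1]; omega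
    rw [e]; exact h1
  · rcases Nat.lt_or_ge ((j : ℕ) + 1) (q : ℕ) with h' | h'
    · rw [pk_ins_gt j q.castSucc (by omega), pk_ins_gt j q.succ (by omega)]
      apply hσ
      rw [Fin.mk_lt_mk]; omega
    · have hq : (q : ℕ) = (j : ℕ) + 1 := by omega
      rw [pk_ins_eq j q.castSucc (by omega), pk_ins_gt j q.succ (by omega)]
      have e : (⟨((q.succ : Fin (k' + 2)) : ℕ) - 1, by omega⟩ : Fin (k' + 1))
          = j.succ := by
        apply Fin.ext; simp [hq2, hq]
      rw [e]; exact h2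

end evalLemmas

section prodLemmas

variable {σ : Fin (k' + 1) → Fin n} {i : Fin n} (X M : Fin n → ℝ)

lemma pk_snoc_P : (∏ j : Fin (k' + 2), M ((Fin.snoc σ i : Fin (k' + 2) → Fin n) j))
    = pkP M σ * M i := by
  rw [Fin.prod_univ_castSucc]
  simp [Fin.snoc_castSucc, Fin.snoc_last, pkP]

lemma pk_snoc_Qe : (∏ l ∈ Finset.univ.erase (Fin.last k'),
      (X ((Fin.snoc σ i : Fin (k' + 2) → Fin n) l.castSucc)
        - X ((Fin.snoc σ i : Fin (k' + 2) → Fin n) l.succ)) ^ 2)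
    = pkQ X σ := by
  rw [pk_prod_erase_eq, Fin.prod_univ_castSucc, if_pos rfl, mul_one]
  simp only [pkQ, pkgap]
  apply Finset.prod_congr rfl
  intro l _
  rw [if_neg (Fin.castSucc_lt_last l).ne, Fin.snoc_castSucc, Fin.succ_castSucc,
    Fin.snoc_castSucc]

lemma pk_cons_P : (∏ j : Fin (k' + 2), M ((Fin.cons i σ : Fin (k' + 2) → Fin n) j))
    = M i * pkP M σ := by
  rw [Fin.prod_univ_succ]
  simp [Fin.cons_zero, Fin.cons_succ, pkP]

lemma pk_cons_Qe : (∏ l ∈ Finset.univ.erase (0 : Fin (k' + 1)),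
      (X ((Fin.cons i σ : Fin (k' + 2) → Fin n) l.castSucc)
        - X ((Fin.cons i σ : Fin (k' + 2) → Fin n) l.succ)) ^ 2)
    = pkQ X σ := by
  rw [pk_prod_erase_eq, Fin.prod_univ_succ, if_pos rfl, one_mul]
  simp only [pkQ, pkgap]
  apply Finset.prod_congr rfl
  intro l _
  rw [if_neg (Fin.succ_ne_zero l), ← Fin.succ_castSucc, Fin.cons_succ, Fin.cons_succ]

lemma pk_ins_P (j : Fin k') : (∏ q : Fin (k' + 2), M (pkIns j i σ q)) = M i * pkP M σ := by
  rw [Fin.prod_univ_succAbove (fun q => M (pkIns j i σ q)) (Fin.castSucc j.succ)]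
  simp only [pkIns, Fin.insertNth_apply_same, Fin.insertNth_apply_succAbove, pkP]

lemma pk_ins_Qe_cast (j : Fin k') :
    (∏ q ∈ Finset.univ.erase j.castSucc,
      (X (pkIns j i σ q.castSucc) - X (pkIns j i σ q.succ)) ^ 2)
    = (X i - X (σ j.succ)) ^ 2 * pkQe X σ j := by
  rw [pk_prod_erase_eq,
    Fin.prod_univ_succAbove (fun q => if q = j.castSucc then (1 : ℝ)
      else (X (pkIns j i σ q.castSucc) - X (pkIns j i σ q.succ)) ^ 2) j.castSucc,
    if_pos rfl, one_mul]
  have key : ∀ l : Fin k',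
      (if (j.castSucc : Fin (k' + 1)).succAbove l = j.castSucc then (1 : ℝ)
        else (X (pkIns j i σ ((j.castSucc : Fin (k' + 1)).succAbove l).castSucc)
          - X (pkIns j i σ ((j.castSucc : Fin (k' + 1)).succAbove l).succ)) ^ 2)
      = (if l = j then (X i - X (σ j.succ)) ^ 2 else pkgap X σ l ^ 2) := by
    intro l
    rw [if_neg (Fin.succAbove_ne _ l)]
    have hjk := j.isLt
    have hlk := l.isLt
    set q : Fin (k' + 1) := (j.castSucc : Fin (k' + 1)).succAbove l with hqdef
    have hv : (q : ℕ) = if (l : ℕ) < (j : ℕ) then (l : ℕ) else (l : ℕ) + 1 := by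
      rw [hqdef, pk_succAbove_coe]; simp
    have hc : ((q.castSucc : Fin (k' + 2)) : ℕ) = (q : ℕ) := by simp
    have hs : ((q.succ : Fin (k' + 2)) : ℕ) = (q : ℕ) + 1 := by simp
    rcases lt_trichotomy ((l : ℕ)) ((j : ℕ)) with h | h | h
    · rw [if_pos h] at hv
      rw [if_neg (by rintro rfl; exact lt_irrefl _ h)]
      have e1 : pkIns j i σ q.castSucc = σ l.castSucc := by
        rw [pk_ins_lt j q.castSucc (by omega)]
        congr 1; apply Fin.ext; simp; omega
      have e2 : pkIns j i σ q.succ = σ l.succ := by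
        rw [pk_ins_lt j q.succ (by omega)]
        congr 1; apply Fin.ext; simp; omega
      rw [e1, e2, pkgap]
    · rw [if_neg (by omega)] at hv
      rw [if_pos (Fin.ext h)]
      have e1 : pkIns j i σ q.castSucc = i := pk_ins_eq j q.castSucc (by omega)
      have e2 : pkIns j i σ q.succ = σ j.succ := by
        rw [pk_ins_gt j q.succ (by omega)]
        congr 1; apply Fin.ext; simp; omega
      rw [e1, e2]
    · rw [if_neg (by omega)] at hv
      rw [if_neg (by rintro rfl; exact lt_irrefl _ h)]
      have e1 : pkIns j i σ q.castSucc = σ l.castSucc := by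
        rw [pk_ins_gt j q.castSucc (by omega)]
        congr 1; apply Fin.ext; simp; omega
      have e2 : pkIns j i σ q.succ = σ l.succ := by
        rw [pk_ins_gt j q.succ (by omega)]
        congr 1; apply Fin.ext; simp; omega
      rw [e1, e2, pkgap]
  rw [Finset.prod_congr rfl (fun l _ => key l),
    ← Finset.mul_prod_erase Finset.univ _ (Finset.mem_univ j), if_pos rfl]
  congr 1
  rw [pkQe]
  apply Finset.prod_congr rfl
  intro l hl
  rw [if_neg (Finset.ne_of_mem_erase hl)]

lemma pk_ins_Qe_succ (j : Fin k') :
    (∏ q ∈ Finset.univ.erase j.succ,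
      (X (pkIns j i σ q.castSucc) - X (pkIns j i σ q.succ)) ^ 2)
    = (X i - X (σ j.castSucc)) ^ 2 * pkQe X σ j := by
  rw [pk_prod_erase_eq,
    Fin.prod_univ_succAbove (fun q => if q = j.succ then (1 : ℝ)
      else (X (pkIns j i σ q.castSucc) - X (pkIns j i σ q.succ)) ^ 2) j.succ,
    if_pos rfl, one_mul]
  have key : ∀ l : Fin k',
      (if (j.succ : Fin (k' + 1)).succAbove l = j.succ then (1 : ℝ)
        else (X (pkIns j i σ ((j.succ : Fin (k' + 1)).succAbove l).castSucc)
          - X (pkIns j i σ ((j.succ : Fin (k' + 1)).succAbove l).succ)) ^ 2)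
      = (if l = j then (X i - X (σ j.castSucc)) ^ 2 else pkgap X σ l ^ 2) := by
    intro l
    rw [if_neg (Fin.succAbove_ne _ l)]
    have hjk := j.isLt
    have hlk := l.isLt
    set q : Fin (k' + 1) := (j.succ : Fin (k' + 1)).succAbove l with hqdef
    have hv : (q : ℕ) = if (l : ℕ) < (j : ℕ) + 1 then (l : ℕ) else (l : ℕ) + 1 := by
      rw [hqdef, pk_succAbove_coe]; simp
    have hc : ((q.castSucc : Fin (k' + 2)) : ℕ) = (q : ℕ) := by simp
    have hs : ((q.succ : Fin (k' + 2)) : ℕ) = (q : ℕ) + 1 := by simp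
    rcases lt_trichotomy ((l : ℕ)) ((j : ℕ)) with h | h | h
    · rw [if_pos (by omega)] at hv
      rw [if_neg (by rintro rfl; exact lt_irrefl _ h)]
      have e1 : pkIns j i σ q.castSucc = σ l.castSucc := by
        rw [pk_ins_lt j q.castSucc (by omega)]
        congr 1; apply Fin.ext; simp; omega
      have e2 : pkIns j i σ q.succ = σ l.succ := by
        rw [pk_ins_lt j q.succ (by omega)]
        congr 1; apply Fin.ext; simp; omega
      rw [e1, e2, pkgap]
    · rw [if_pos (by omega)] at hv
      rw [if_pos (Fin.ext h)]
      have e1 : pkIns j i σ q.castSucc = σ j.castSucc := by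
        rw [pk_ins_lt j q.castSucc (by omega)]
        congr 1; apply Fin.ext; simp; omega
      have e2 : pkIns j i σ q.succ = i := pk_ins_eq j q.succ (by omega)
      rw [e1, e2]
      ring
    · rw [if_neg (by omega)] at hv
      rw [if_neg (by rintro rfl; exact lt_irrefl _ h)]
      have e1 : pkIns j i σ q.castSucc = σ l.castSucc := by
        rw [pk_ins_gt j q.castSucc (by omega)]
        congr 1; apply Fin.ext; simp; omega
      have e2 : pkIns j i σ q.succ = σ l.succ := by
        rw [pk_ins_gt j q.succ (by omega)]
        congr 1; apply Fin.ext; simp; omega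
      rw [e1, e2, pkgap]
  rw [Finset.prod_congr rfl (fun l _ => key l),
    ← Finset.mul_prod_erase Finset.univ _ (Finset.mem_univ j), if_pos rfl]
  congr 1
  rw [pkQe]
  apply Finset.prod_congr rfl
  intro l hl
  rw [if_neg (Finset.ne_of_mem_erase hl)]

end prodLemmas

noncomputable def pkH (X M : Fin n → ℝ) (τ : Fin (k' + 2) → Fin n) (q : Fin (k' + 1)) : ℝ :=
  (∏ j, M (τ j)) * ∏ l ∈ Finset.univ.erase q, (X (τ l.castSucc) - X (τ l.succ)) ^ 2

lemma pk_succAbove_strictMono {K : ℕ} (p : Fin (K + 1)) : StrictMono p.succAbove := by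
  intro a b hab
  rw [Fin.lt_def, pk_succAbove_coe, pk_succAbove_coe]
  rw [Fin.lt_def] at hab
  split_ifs <;> omega

lemma pk_piece1 (X M : Fin n → ℝ) :
    ∑ σ ∈ pkS n (k' + 1), pkP M σ * pkQ X σ * pkSgt M (σ (Fin.last k'))
    = ∑ τ ∈ pkS n (k' + 2), pkH X M τ (Fin.last k') := by
  classical
  have step : ∀ σ : Fin (k' + 1) → Fin n,
      pkP M σ * pkQ X σ * pkSgt M (σ (Fin.last k'))
      = ∑ i ∈ Finset.univ.filter (fun i => σ (Fin.last k') < i), pkP M σ * pkQ X σ * M i := by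
    intro σ; rw [pkSgt, Finset.mul_sum]
  rw [Finset.sum_congr rfl (fun σ _ => step σ), Finset.sum_sigma']
  apply Finset.sum_nbij' (fun a => (Fin.snoc a.1 a.2 : Fin (k' + 2) → Fin n))
    (fun τ => ⟨fun l => τ l.castSucc, τ (Fin.last (k' + 1))⟩)
  · intro a ha
    rw [Finset.mem_sigma] at ha
    rw [pk_mem_S]
    exact pk_good_snoc (pk_mem_S.mp ha.1) (Finset.mem_filter.mp ha.2).2
  · intro τ hτ
    rw [pk_mem_S] at hτ
    rw [Finset.mem_sigma]
    refine ⟨pk_mem_S.mpr (fun a b hab => hτ (by rwa [Fin.castSucc_lt_castSucc_iff])), ?_⟩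
    exact Finset.mem_filter.mpr ⟨Finset.mem_univ _, hτ (Fin.castSucc_lt_last _)⟩
  · intro a _
    obtain ⟨σ, iv⟩ := a
    simp [Fin.snoc_castSucc, Fin.snoc_last]
  · intro τ _
    funext l
    rcases Fin.eq_castSucc_or_eq_last l with ⟨l', rfl⟩ | rfl
    · rw [Fin.snoc_castSucc]
    · rw [Fin.snoc_last]
  · intro a _
    obtain ⟨σ, iv⟩ := a
    rw [pkH, pk_snoc_P, pk_snoc_Qe]
    ring

lemma pk_piece2 (X M : Fin n → ℝ) :
    ∑ σ ∈ pkS n (k' + 1), pkP M σ * pkQ X σ * pkSlt M (σ 0)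
    = ∑ τ ∈ pkS n (k' + 2), pkH X M τ 0 := by
  classical
  have step : ∀ σ : Fin (k' + 1) → Fin n,
      pkP M σ * pkQ X σ * pkSlt M (σ 0)
      = ∑ i ∈ Finset.univ.filter (fun i => i < σ 0), pkP M σ * pkQ X σ * M i := by
    intro σ; rw [pkSlt, Finset.mul_sum]
  rw [Finset.sum_congr rfl (fun σ _ => step σ), Finset.sum_sigma']
  apply Finset.sum_nbij' (fun a => (Fin.cons a.2 a.1 : Fin (k' + 2) → Fin n))
    (fun τ => ⟨fun l => τ l.succ, τ 0⟩)
  · intro a ha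
    rw [Finset.mem_sigma] at ha
    rw [pk_mem_S]
    exact pk_good_cons (pk_mem_S.mp ha.1) (Finset.mem_filter.mp ha.2).2
  · intro τ hτ
    rw [pk_mem_S] at hτ
    rw [Finset.mem_sigma]
    refine ⟨pk_mem_S.mpr (fun a b hab => hτ (by rwa [Fin.succ_lt_succ_iff])), ?_⟩
    exact Finset.mem_filter.mpr ⟨Finset.mem_univ _, hτ (Fin.succ_pos _)⟩
  · intro a _
    obtain ⟨σ, iv⟩ := a
    simp [Fin.cons_succ, Fin.cons_zero]
  · intro τ _
    funext l
    rcases Fin.eq_zero_or_eq_succ l with rfl | ⟨l', rfl⟩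
    · rw [Fin.cons_zero]
    · rw [Fin.cons_succ]
  · intro a _
    obtain ⟨σ, iv⟩ := a
    rw [pkH, pk_cons_P, pk_cons_Qe]
    ring

lemma pk_piece3p (X M : Fin n → ℝ) (j : Fin k') :
    ∑ σ ∈ pkS n (k' + 1), ∑ i ∈ Finset.univ.filter (fun i => σ j.castSucc < i ∧ i < σ j.succ),
        pkP M σ * pkQe X σ j * M i * (X i - X (σ j.succ)) ^ 2
    = ∑ τ ∈ pkS n (k' + 2), pkH X M τ j.castSucc := by
  classical
  rw [Finset.sum_sigma']
  apply Finset.sum_nbij' (fun a => pkIns j a.2 a.1)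
    (fun τ => ⟨fun l => τ ((Fin.castSucc j.succ).succAbove l), τ (Fin.castSucc j.succ)⟩)
  · intro a ha
    rw [Finset.mem_sigma] at ha
    have h2 := (Finset.mem_filter.mp ha.2).2
    rw [pk_mem_S]
    exact pk_good_ins (pk_mem_S.mp ha.1) j h2.1 h2.2
  · intro τ hτ
    rw [pk_mem_S] at hτ
    rw [Finset.mem_sigma]
    constructor
    · exact pk_mem_S.mpr (hτ.comp (pk_succAbove_strictMono _))
    · refine Finset.mem_filter.mpr ⟨Finset.mem_univ _, ?_, ?_⟩
      · apply hτ
        rw [Fin.lt_def, pk_succAbove_coe]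
        simp only [Fin.coe_castSucc, Fin.val_succ]
        have := j.isLt; split_ifs <;> omega
      · apply hτ
        rw [Fin.lt_def, pk_succAbove_coe]
        simp only [Fin.coe_castSucc, Fin.val_succ]
        have := j.isLt; split_ifs <;> omega
  · intro a _
    obtain ⟨σ, iv⟩ := a
    simp [pkIns, Fin.insertNth_apply_succAbove, Fin.insertNth_apply_same]
  · intro τ _
    funext l
    by_cases hl : l = Fin.castSucc j.succ
    · subst hl
      simp [pkIns, Fin.insertNth_apply_same]
    · obtain ⟨l', rfl⟩ := Fin.exists_succAbove_eq hl
      simp [pkIns, Fin.insertNth_apply_succAbove]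
  · intro a _
    obtain ⟨σ, iv⟩ := a
    rw [pkH, pk_ins_P, pk_ins_Qe_cast]
    ring

lemma pk_piece3m (X M : Fin n → ℝ) (j : Fin k') :
    ∑ σ ∈ pkS n (k' + 1), ∑ i ∈ Finset.univ.filter (fun i => σ j.castSucc < i ∧ i < σ j.succ),
        pkP M σ * pkQe X σ j * M i * (X i - X (σ j.castSucc)) ^ 2
    = ∑ τ ∈ pkS n (k' + 2), pkH X M τ j.succ := by
  classical
  rw [Finset.sum_sigma']
  apply Finset.sum_nbij' (fun a => pkIns j a.2 a.1)
    (fun τ => ⟨fun l => τ ((Fin.castSucc j.succ).succAbove l), τ (Fin.castSucc j.succ)⟩)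
  · intro a ha
    rw [Finset.mem_sigma] at ha
    have h2 := (Finset.mem_filter.mp ha.2).2
    rw [pk_mem_S]
    exact pk_good_ins (pk_mem_S.mp ha.1) j h2.1 h2.2
  · intro τ hτ
    rw [pk_mem_S] at hτ
    rw [Finset.mem_sigma]
    constructor
    · exact pk_mem_S.mpr (hτ.comp (pk_succAbove_strictMono _))
    · refine Finset.mem_filter.mpr ⟨Finset.mem_univ _, ?_, ?_⟩
      · apply hτ
        rw [Fin.lt_def, pk_succAbove_coe]
        simp only [Fin.coe_castSucc, Fin.val_succ]
        have := j.isLt; split_ifs <;> omega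
      · apply hτ
        rw [Fin.lt_def, pk_succAbove_coe]
        simp only [Fin.coe_castSucc, Fin.val_succ]
        have := j.isLt; split_ifs <;> omega
  · intro a _
    obtain ⟨σ, iv⟩ := a
    simp [pkIns, Fin.insertNth_apply_succAbove, Fin.insertNth_apply_same]
  · intro τ _
    funext l
    by_cases hl : l = Fin.castSucc j.succ
    · subst hl
      simp [pkIns, Fin.insertNth_apply_same]
    · obtain ⟨l', rfl⟩ := Fin.exists_succAbove_eq hl
      simp [pkIns, Fin.insertNth_apply_succAbove]
  · intro a _
    obtain ⟨σ, iv⟩ := a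
    rw [pkH, pk_ins_P, pk_ins_Qe_succ]
    ring

lemma pk_global (X M : Fin n → ℝ) :
    ∑ σ ∈ pkS n (k' + 1),
      (2 * (pkP M σ * pkQ X σ * (pkSgt M (σ (Fin.last k')) - pkSlt M (σ 0)))
        + ∑ j : Fin k', ∑ i ∈ Finset.univ.filter (fun i => σ j.castSucc < i ∧ i < σ j.succ),
            pkP M σ * pkQe X σ j
              * (M i * (2 * ((X i - X (σ j.succ)) ^ 2 - (X i - X (σ j.castSucc)) ^ 2))))
    = 0 := by
  classical
  rw [Finset.sum_add_distrib]
  have A : ∑ σ ∈ pkS n (k' + 1),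
      2 * (pkP M σ * pkQ X σ * (pkSgt M (σ (Fin.last k')) - pkSlt M (σ 0)))
      = 2 * (∑ τ ∈ pkS n (k' + 2), pkH X M τ (Fin.last k'))
        - 2 * (∑ τ ∈ pkS n (k' + 2), pkH X M τ 0) := by
    rw [← pk_piece1 X M, ← pk_piece2 X M, Finset.mul_sum, Finset.mul_sum,
      ← Finset.sum_sub_distrib]
    exact Finset.sum_congr rfl (fun σ _ => by ring)
  have B : ∑ σ ∈ pkS n (k' + 1),
      ∑ j : Fin k', ∑ i ∈ Finset.univ.filter (fun i => σ j.castSucc < i ∧ i < σ j.succ),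
          pkP M σ * pkQe X σ j
            * (M i * (2 * ((X i - X (σ j.succ)) ^ 2 - (X i - X (σ j.castSucc)) ^ 2)))
      = ∑ j : Fin k', (2 * (∑ τ ∈ pkS n (k' + 2), pkH X M τ j.castSucc)
          - 2 * (∑ τ ∈ pkS n (k' + 2), pkH X M τ j.succ)) := by
    rw [Finset.sum_comm]
    apply Finset.sum_congr rfl
    intro j _
    rw [← pk_piece3p X M j, ← pk_piece3m X M j, Finset.mul_sum, Finset.mul_sum,
      ← Finset.sum_sub_distrib]
    apply Finset.sum_congr rfl
    intro σ _
    rw [Finset.mul_sum, Finset.mul_sum, ← Finset.sum_sub_distrib]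
    apply Finset.sum_congr rfl
    intro i _
    ring
  rw [A, B]
  have T := pk_tele k' (fun q => ∑ τ ∈ pkS n (k' + 2), pkH X M τ q)
  have E : ∑ j : Fin k', (2 * (∑ τ ∈ pkS n (k' + 2), pkH X M τ j.castSucc)
      - 2 * (∑ τ ∈ pkS n (k' + 2), pkH X M τ j.succ))
      = 2 * ((∑ τ ∈ pkS n (k' + 2), pkH X M τ 0)
        - (∑ τ ∈ pkS n (k' + 2), pkH X M τ (Fin.last k'))) := by
    rw [← T, Finset.mul_sum]
    exact Finset.sum_congr rfl (fun j _ => by ring)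
  rw [E]
  ring

lemma pk_key (X M : Fin n → ℝ) (hX : StrictMono X) :
    ∑ σ ∈ pkS n (k' + 1),
      ((∑ j, (∏ l ∈ Finset.univ.erase j, M (σ l))
          * (2 * ∑ i, M (σ j) * M i * Real.sign (X i - X (σ j)))) * pkQ X σ
        + pkP M σ * (∑ j : Fin k', pkQe X σ j
            * (2 * (X (σ j.castSucc) - X (σ j.succ))
              * ((∑ i, M i * |X (σ j.castSucc) - X i|) - ∑ i, M i * |X (σ j.succ) - X i|))))
    = 0 := by
  rw [Finset.sum_congr rfl (fun σ hσ => pk_per_sigma X M hX σ (pk_mem_S.mp hσ))]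
  exact pk_global X M

/-- **Conservation of the quantities `M_k` for the derivative Burgers peakon ODEs.**
If `x k, m k : ℝ → ℝ` satisfy
`ẋ_k = Σ_i m_i |x_k − x_i|` and `ṁ_k = 2 Σ_i m_k m_i sgn(x_i − x_k)` (with `sgn 0 = 0`),
and `x_1(t) < ⋯ < x_n(t)` for all `t`, then for every `1 ≤ k ≤ n` the function
`M_k(t) = Σ_{i_1<⋯<i_k} (∏_j m_{i_j}(t)) ∏_{j=1}^{k−1} (x_{i_j}(t) − x_{i_{j+1}}(t))²`
is constant in `t`.  (Here `k = k' + 1`, the sum over `k`-element subsets of `{1,…,n}`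
is encoded as a sum over strictly increasing tuples `σ : Fin (k'+1) → Fin n`, and the
inner product is empty, i.e. `1`, when `k = 1`.) -/
theorem stmt1 (n : ℕ) (hn : 1 ≤ n) (x m : Fin n → ℝ → ℝ)
    (hord : ∀ t : ℝ, StrictMono fun k => x k t)
    (hx : ∀ (k : Fin n) (t : ℝ),
      HasDerivAt (x k) (∑ i, m i t * |x k t - x i t|) t)
    (hm : ∀ (k : Fin n) (t : ℝ),
      HasDerivAt (m k) (2 * ∑ i, m k t * m i t * Real.sign (x i t - x k t)) t)
    (k' : ℕ) (hk : k' + 1 ≤ n) (s t : ℝ) :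
    (∑ σ ∈ Finset.univ.filter
        (fun σ : Fin (k' + 1) → Fin n => ∀ a b : Fin (k' + 1), a < b → σ a < σ b),
      (∏ j, m (σ j) s) * ∏ j : Fin k', (x (σ j.castSucc) s - x (σ j.succ) s) ^ 2)
    = ∑ σ ∈ Finset.univ.filter
        (fun σ : Fin (k' + 1) → Fin n => ∀ a b : Fin (k' + 1), a < b → σ a < σ b),
      (∏ j, m (σ j) t) * ∏ j : Fin k', (x (σ j.castSucc) t - x (σ j.succ) t) ^ 2 := by
  have key : ∀ u : ℝ, HasDerivAt (fun v => ∑ σ ∈ pkS n (k' + 1),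
      (∏ j, m (σ j) v) * ∏ j : Fin k', (x (σ j.castSucc) v - x (σ j.succ) v) ^ 2) 0 u := by
    intro u
    have hderiv : HasDerivAt (fun v => ∑ σ ∈ pkS n (k' + 1),
        (∏ j, m (σ j) v) * ∏ j : Fin k', (x (σ j.castSucc) v - x (σ j.succ) v) ^ 2)
        (∑ σ ∈ pkS n (k' + 1),
          ((∑ j, (∏ l ∈ Finset.univ.erase j, m (σ l) u)
              • (2 * ∑ i, m (σ j) u * m i u * Real.sign (x i u - x (σ j) u)))
              * (∏ j : Fin k', (x (σ j.castSucc) u - x (σ j.succ) u) ^ 2)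
            + (∏ j, m (σ j) u)
              * (∑ j : Fin k',
                  (∏ l ∈ Finset.univ.erase j, (x (σ l.castSucc) u - x (σ l.succ) u) ^ 2)
                  • (((2 : ℕ) : ℝ) * (x (σ j.castSucc) u - x (σ j.succ) u) ^ (2 - 1)
                    * ((∑ i, m i u * |x (σ j.castSucc) u - x i u|)
                      - ∑ i, m i u * |x (σ j.succ) u - x i u|))))) u := by
      apply HasDerivAt.fun_sum
      intro σ _
      exact (HasDerivAt.fun_finset_prod (fun j _ => hm (σ j) u)).mul
        (HasDerivAt.fun_finset_prod (fun (j : Fin k') _ =>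
          ((hx (σ j.castSucc) u).sub (hx (σ j.succ) u)).pow 2))
    have hzero : (∑ σ ∈ pkS n (k' + 1),
          ((∑ j, (∏ l ∈ Finset.univ.erase j, m (σ l) u)
              • (2 * ∑ i, m (σ j) u * m i u * Real.sign (x i u - x (σ j) u)))
              * (∏ j : Fin k', (x (σ j.castSucc) u - x (σ j.succ) u) ^ 2)
            + (∏ j, m (σ j) u)
              * (∑ j : Fin k',
                  (∏ l ∈ Finset.univ.erase j, (x (σ l.castSucc) u - x (σ l.succ) u) ^ 2)
                  • (((2 : ℕ) : ℝ) * (x (σ j.castSucc) u - x (σ j.succ) u) ^ (2 - 1)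
                    * ((∑ i, m i u * |x (σ j.castSucc) u - x i u|)
                      - ∑ i, m i u * |x (σ j.succ) u - x i u|))))) = 0 := by
      refine Eq.trans (Finset.sum_congr rfl ?_)
        (pk_key (fun a => x a u) (fun a => m a u) (hord u))
      intro σ _
      simp only [pkP, pkQ, pkQe, pkgap, smul_eq_mul]
      norm_num
    exact hzero ▸ hderiv
  have hdiff : Differentiable ℝ (fun v => ∑ σ ∈ pkS n (k' + 1),
      (∏ j, m (σ j) v) * ∏ j : Fin k', (x (σ j.castSucc) v - x (σ j.succ) v) ^ 2) :=
    fun u => (key u).differentiableAt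
  have hc := is_const_of_deriv_eq_zero hdiff (fun u => (key u).deriv) s t
  exact hc
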